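/- Let E, A ∈ K^{n×n} with ran[E; A] = D∘L, where D ⊆ K^{2n} is a maximally dissipative linear relation and L = (graph Q)^{−1} for some positive definite matrix Q ∈ K^{n×n}. Then the pencil sE − A is regular and has index at most one. -/

import Mathlib

open Matrix
open scoped ComplexOrder

namespace PHDAE
noncomputable section

/-- A linear relation on `ℂ^n`: a subspace of `ℂ^n × ℂ^n`. -/
abbrev Rel (n : ℕ) := Submodule ℂ ((Fin n → ℂ) × (Fin n → ℂ))

/-- The standard inner ℂ product `⟨x,y⟩ = ∑ conj (x i) * y i` on `ℂ^n`
(conjugate-linear in the first argument). -/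
noncomputable def ip {n : ℕ} (x y : Fin n → ℂ) : ℂ := star x ⬝ᵥ y

/-- The adjoint relation `M* = {(x,y) | ⟪x,w⟫ = ⟪y,v⟫ for all (v,w) ∈ M}`. -/
noncomputable def adj {n : ℕ} (M : Rel n) : Rel n where
  carrier := {p | ∀ q ∈ M, ip p.1 q.2 = ip p.2 q.1}
  add_mem' := by
    intro a b ha hb q hq
    simp only [Set.mem_setOf_eq, ip, Prod.fst_add, Prod.snd_add, star_add,
      add_dotProduct] at *
    rw [ha q hq, hb q hq]
  zero_mem' := by
    intro q hq; simp [ip]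
  smul_mem' := by
    intro c a ha q hq
    simp only [Set.mem_setOf_eq, ip, Prod.smul_fst, Prod.smul_snd, star_smul,
      smul_dotProduct] at *
    rw [ha q hq]

/-- `−M = {(x, −y) | (x,y) ∈ M}`. -/
def negRel {n : ℕ} (M : Rel n) : Rel n :=
  M.map (LinearMap.prodMap LinearMap.id (-LinearMap.id))

/-- The inverse relation `M⁻¹ = {(y,x) | (x,y) ∈ M}`. -/
def invRel {n : ℕ} (M : Rel n) : Rel n :=
  M.map (LinearEquiv.prodComm ℂ (Fin n → ℂ) (Fin n → ℂ)).toLinearMap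

/-- The product (composition) `D ∘ L = {(x,z) | ∃ y, (x,y) ∈ L ∧ (y,z) ∈ D}`. -/
def comp {n : ℕ} (D L : Rel n) : Rel n where
  carrier := {p | ∃ y, (p.1, y) ∈ L ∧ (y, p.2) ∈ D}
  add_mem' := by
    rintro a b ⟨y, hy1, hy2⟩ ⟨z, hz1, hz2⟩
    exact ⟨y + z, by simpa using L.add_mem hy1 hz1, by simpa using D.add_mem hy2 hz2⟩
  zero_mem' := ⟨0, L.zero_mem, D.zero_mem⟩
  smul_mem' := by
    rintro c a ⟨y, hy1, hy2⟩
    exact ⟨c • y, by simpa using L.smul_mem c hy1, by simpa using D.smul_mem c hy2⟩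

/-- The range representation `ran [F; G] = {(Fz, Gz) | z ∈ ℂ^l}`. -/
def ranRel {n l : ℕ} (F G : Matrix (Fin n) (Fin l) ℂ) : Rel n :=
  LinearMap.range ((Matrix.mulVecLin F).prod (Matrix.mulVecLin G))

/-- The kernel representation `ker [K, L] = {(x,y) | Kx + Ly = 0}`. -/
def kerRel {n : ℕ} (K L : Matrix (Fin n) (Fin n) ℂ) : Rel n :=
  LinearMap.ker ((Matrix.mulVecLin K).coprod (Matrix.mulVecLin L))

/-- The graph `{(x, Ax) | x ∈ ℂ^n}` of a matrix. -/
def graphRel {n : ℕ} (A : Matrix (Fin n) (Fin n) ℂ) : Rel n :=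
  ranRel 1 A

def domRel {n : ℕ} (M : Rel n) : Submodule ℂ (Fin n → ℂ) :=
  M.map (LinearMap.fst ℂ _ _)

def ranSRel {n : ℕ} (M : Rel n) : Submodule ℂ (Fin n → ℂ) :=
  M.map (LinearMap.snd ℂ _ _)

def kerSRel {n : ℕ} (M : Rel n) : Submodule ℂ (Fin n → ℂ) :=
  M.comap (LinearMap.inl ℂ _ _)

def mulRel {n : ℕ} (M : Rel n) : Submodule ℂ (Fin n → ℂ) :=
  M.comap (LinearMap.inr ℂ _ _)

/-- Orthogonal complement in `ℂ^n` with respect to the standard inner ℂ product. -/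
noncomputable def orth {n : ℕ} (S : Submodule ℂ (Fin n → ℂ)) : Submodule ℂ (Fin n → ℂ) where
  carrier := {y | ∀ x ∈ S, ip x y = 0}
  add_mem' := by
    intro a b ha hb x hx
    simp only [Set.mem_setOf_eq, ip, dotProduct_add] at *
    rw [ha x hx, hb x hx, add_zero]
  zero_mem' := by intro x hx; simp [ip]
  smul_mem' := by
    intro c a ha x hx
    simp only [Set.mem_setOf_eq, ip, dotProduct_smul] at *
    rw [ha x hx, smul_zero]

def IsSymmetricRel {n : ℕ} (M : Rel n) : Prop := M ≤ adj M
def IsSelfAdjointRel {n : ℕ} (M : Rel n) : Prop := M = adj M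
def IsSkewSymmetricRel {n : ℕ} (M : Rel n) : Prop := M ≤ negRel (adj M)
def IsSkewAdjointRel {n : ℕ} (M : Rel n) : Prop := M = negRel (adj M)

def IsDissipativeRel {n : ℕ} (M : Rel n) : Prop := ∀ p ∈ M, (ip p.1 p.2).re ≤ 0
def IsNonnegRel {n : ℕ} (M : Rel n) : Prop :=
  IsSymmetricRel M ∧ ∀ p ∈ M, 0 ≤ ip p.1 p.2
def IsMaxDissipativeRel {n : ℕ} (M : Rel n) : Prop :=
  IsDissipativeRel M ∧ ∀ M' : Rel n, IsDissipativeRel M' → M ≤ M' → M = M'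
def IsMaxNonnegRel {n : ℕ} (M : Rel n) : Prop :=
  IsNonnegRel M ∧ ∀ M' : Rel n, IsNonnegRel M' → M ≤ M' → M = M'

/-- `det (s E − A)` as a polynomial in `s`. -/
noncomputable def pencilDet {n : ℕ} (E A : Matrix (Fin n) (Fin n) ℂ) : Polynomial ℂ :=
  ((Polynomial.X : Polynomial ℂ) • E.map Polynomial.C - A.map Polynomial.C).det

/-- A square pencil is regular if `det (sE − A)` is not the zero polynomial. -/
def PencilRegular {n : ℕ} (E A : Matrix (Fin n) (Fin n) ℂ) : Prop :=
  pencilDet E A ≠ 0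

/-- The (generic) rank of the pencil `sE − A` over the field of rational functions. -/
noncomputable def pencilRank {n : ℕ} (E A : Matrix (Fin n) (Fin n) ℂ) : ℕ :=
  (((Polynomial.X : Polynomial ℂ) • E.map Polynomial.C - A.map Polynomial.C).map
    (algebraMap (Polynomial ℂ) (RatFunc ℂ))).rank

/-- `μ` is an eigenvalue of `sE − A` if the rank of `μE − A` drops below the generic rank. -/
noncomputable def IsPencilEigenvalue {n : ℕ} (E A : Matrix (Fin n) (Fin n) ℂ) (μ : ℂ) : Prop :=
  (μ • E - A).rank < pencilRank E A

/-- For a regular pencil, the eigenvalue `μ` is semi-simple iff there is no Jordan chain of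
length two, i.e. no `x ≠ 0` with `(μE − A)x = 0` and `Ex ∈ ran (μE − A)`. -/
def SemiSimpleEig {n : ℕ} (E A : Matrix (Fin n) (Fin n) ℂ) (μ : ℂ) : Prop :=
  ¬ ∃ x y : Fin n → ℂ, x ≠ 0 ∧ (μ • E - A).mulVec x = 0 ∧ (μ • E - A).mulVec y = E.mulVec x

/-- For a regular pencil, all Jordan blocks at the eigenvalue `μ` have size at most two iff
there is no Jordan chain of length three. -/
def JordanBlocksAtMostTwo {n : ℕ} (E A : Matrix (Fin n) (Fin n) ℂ) (μ : ℂ) : Prop :=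
  ¬ ∃ x y z : Fin n → ℂ, x ≠ 0 ∧ (μ • E - A).mulVec x = 0 ∧
    (μ • E - A).mulVec y = E.mulVec x ∧ (μ • E - A).mulVec z = E.mulVec y

/-- A fixed matrix norm (Frobenius norm); the resolvent-growth characterizations are
independent of the choice of matrix norm. -/
noncomputable def mnorm {n : ℕ} (M : Matrix (Fin n) (Fin n) ℂ) : ℝ :=
  Real.sqrt (∑ i, ∑ j, ‖M i j‖ ^ 2)

end
end PHDAE
section Stmt18Aux
open PHDAE Matrix
noncomputable section
namespace Stmt18

variable {n : ℕ}

abbrev Vn (n : ℕ) := EuclideanSpace ℂ (Fin n)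

def tV {n : ℕ} : (Fin n → ℂ) ≃ₗ[ℂ] Vn n := (WithLp.linearEquiv 2 ℂ (Fin n → ℂ)).symm

lemma tV_apply (x : Fin n → ℂ) (i : Fin n) : tV x i = x i := rfl

lemma ip_eq_inner (x y : Fin n → ℂ) : ip x y = (inner ℂ (tV x) (tV y) : ℂ) := by
  unfold ip; exact dotProduct_comm _ _

lemma ip_re_self (x : Fin n → ℂ) : (ip x x).re = ‖tV x‖ ^ 2 := by
  rw [ip_eq_inner]
  exact inner_self_eq_norm_sq (𝕜 := ℂ) (tV x)

lemma tV_mulVec (M : Matrix (Fin n) (Fin n) ℂ) (x : Fin n → ℂ) :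
    tV (M *ᵥ x) = Matrix.toEuclideanLin M (tV x) := rfl

lemma exists_opBound (M : Matrix (Fin n) (Fin n) ℂ) :
    ∃ C : ℝ, 0 ≤ C ∧ ∀ x : Fin n → ℂ, ‖tV (M *ᵥ x)‖ ≤ C * ‖tV x‖ := by
  refine ⟨‖LinearMap.toContinuousLinearMap (Matrix.toEuclideanLin M)‖, norm_nonneg _, ?_⟩
  intro x
  rw [tV_mulVec]
  exact (LinearMap.toContinuousLinearMap (Matrix.toEuclideanLin M)).le_opNorm (tV x)

end Stmt18
end
end Stmt18Aux
section Stmt18Aux2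
open PHDAE Matrix
noncomputable section
namespace Stmt18
variable {n : ℕ}

lemma coercive {Q : Matrix (Fin n) (Fin n) ℂ} (hQ : Q.PosDef) :
    ∃ c : ℝ, 0 < c ∧ ∀ y : Fin n → ℂ, c * ‖tV y‖ ^ 2 ≤ (ip y (Q *ᵥ y)).re := by
  rcases Nat.eq_zero_or_pos n with hn | hn
  · refine ⟨1, one_pos, fun y => ?_⟩
    subst hn
    have hy : tV y = 0 := Subsingleton.elim _ _
    have hy2 : (ip y (Q *ᵥ y)).re = 0 := by
      have : y = 0 := Subsingleton.elim _ _
      simp [this, ip]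
    rw [hy, hy2]; simp
  · set Qc : Vn n →L[ℂ] Vn n :=
      LinearMap.toContinuousLinearMap (Matrix.toEuclideanLin Q) with hQc
    have hcont : Continuous fun x : Vn n => (inner ℂ x (Qc x) : ℂ).re :=
      (Complex.continuous_re).comp (continuous_id.inner Qc.continuous)
    have hsph : IsCompact (Metric.sphere (0 : Vn n) 1) := isCompact_sphere 0 1
    have hne : (Metric.sphere (0 : Vn n) 1).Nonempty := by
      refine ⟨EuclideanSpace.single ⟨0, hn⟩ (1 : ℂ), ?_⟩
      simp [EuclideanSpace.norm_single]
    obtain ⟨w, hw, hmin⟩ := hsph.exists_isMinOn hne hcont.continuousOn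
    have hw1 : ‖w‖ = 1 := by simpa using hw
    have hwne : w ≠ 0 := by
      intro h0; rw [h0] at hw1; simp at hw1
    have hwne' : tV.symm w ≠ 0 := by
      intro h0; apply hwne
      have := congrArg tV h0
      simpa using this
    set c : ℝ := (inner ℂ w (Qc w) : ℂ).re with hc
    have hQrw : ∀ x : Vn n, (inner ℂ x (Qc x) : ℂ) = ip (tV.symm x) (Q *ᵥ tV.symm x) := by
      intro x
      rw [ip_eq_inner, tV_mulVec]
      simp [hQc]
    have hcpos : 0 < c := by
      have := hQ.re_dotProduct_pos hwne'
      rw [hc, hQrw w]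
      exact this
    refine ⟨c, hcpos, fun y => ?_⟩
    by_cases hy : y = 0
    · simp [hy, ip]
    have hty : tV y ≠ 0 := by
      intro h0; apply hy
      have := congrArg tV.symm h0
      simpa using this
    have hr : 0 < ‖tV y‖ := norm_pos_iff.mpr hty
    set r : ℝ := ‖tV y‖ with hrdef
    set u : Vn n := ((r : ℂ))⁻¹ • tV y with hu
    have hu1 : ‖u‖ = 1 := by
      rw [hu, norm_smul]
      simp only [norm_inv, Complex.norm_real, Real.norm_eq_abs, abs_of_pos hr]
      rw [← hrdef]
      field_simp
    have humem : u ∈ Metric.sphere (0 : Vn n) 1 := by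
      simp [mem_sphere_iff_norm, hu1]
    have hfu : (inner ℂ u (Qc u) : ℂ).re
        = (r ^ 2)⁻¹ * (inner ℂ (tV y) (Qc (tV y)) : ℂ).re := by
      rw [hu, _root_.map_smul, inner_smul_left, inner_smul_right, ← mul_assoc]
      have h2 : (starRingEnd ℂ) ((r : ℂ))⁻¹ * ((r : ℂ))⁻¹ = (((r ^ 2)⁻¹ : ℝ) : ℂ) := by
        rw [map_inv₀, Complex.conj_ofReal]; push_cast; ring
      rw [h2, Complex.re_ofReal_mul]
    have h3 : c ≤ (r ^ 2)⁻¹ * (inner ℂ (tV y) (Qc (tV y)) : ℂ).re := by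
      have h3' : c ≤ (inner ℂ u (Qc u) : ℂ).re := hmin humem
      rw [hfu] at h3'
      exact h3'
    have h4 : (0 : ℝ) < r ^ 2 := by positivity
    have h5 : c * r ^ 2 ≤ (inner ℂ (tV y) (Qc (tV y)) : ℂ).re := by
      calc c * r ^ 2 ≤ ((r ^ 2)⁻¹ * (inner ℂ (tV y) (Qc (tV y)) : ℂ).re) * r ^ 2 :=
            mul_le_mul_of_nonneg_right h3 h4.le
        _ = (inner ℂ (tV y) (Qc (tV y)) : ℂ).re := by field_simp
    have h6 : (inner ℂ (tV y) (Qc (tV y)) : ℂ) = ip y (Q *ᵥ y) := by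
      have := hQrw (tV y)
      simpa using this
    rw [← h6]
    exact h5
end Stmt18
end
end Stmt18Aux2
section Stmt18Aux3
open PHDAE Matrix
noncomputable section
namespace Stmt18
variable {n : ℕ}

lemma mem_comp {D L : Rel n} {p : (Fin n → ℂ) × (Fin n → ℂ)} :
    p ∈ PHDAE.comp D L ↔ ∃ y, (p.1, y) ∈ L ∧ (y, p.2) ∈ D := Iff.rfl

lemma mem_invGraph {Q : Matrix (Fin n) (Fin n) ℂ} {p : (Fin n → ℂ) × (Fin n → ℂ)} :
    p ∈ invRel (graphRel Q) ↔ p.1 = Q *ᵥ p.2 := by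
  rw [invRel, Submodule.mem_map_equiv]
  constructor
  · rintro ⟨x, hx⟩
    have hsymm : ((LinearEquiv.prodComm ℂ (Fin n → ℂ) (Fin n → ℂ)).symm p) = (p.2, p.1) := rfl
    rw [hsymm] at hx
    simp only [LinearMap.prod_apply, Pi.prod, Matrix.mulVecLin_apply, Matrix.one_mulVec,
      Prod.ext_iff] at hx
    obtain ⟨h1, h2⟩ := hx
    rw [← h2, ← h1]
    simp [Function.prod, Matrix.mulVecLin_apply]
  · intro hp
    exact ⟨p.2, by simp [LinearMap.prod_apply, Matrix.mulVecLin_apply, Matrix.one_mulVec,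
      Prod.ext_iff, hp, LinearEquiv.prodComm]⟩

lemma comp_eq_map (D : Rel n) (Q : Matrix (Fin n) (Fin n) ℂ) :
    PHDAE.comp D (invRel (graphRel Q))
      = D.map ((Matrix.mulVecLin Q).prodMap (LinearMap.id (R := ℂ) (M := Fin n → ℂ))) := by
  ext p
  rw [mem_comp]
  constructor
  · rintro ⟨y, h1, h2⟩
    rw [mem_invGraph] at h1
    refine ⟨(y, p.2), h2, ?_⟩
    rw [LinearMap.prodMap_apply]
    exact Prod.ext h1.symm rfl
  · rintro ⟨⟨y, z⟩, hyz, rfl⟩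
    refine ⟨y, ?_, hyz⟩
    rw [mem_invGraph]
    rfl

lemma mem_ranRel_self (E A : Matrix (Fin n) (Fin n) ℂ) (v : Fin n → ℂ) :
    (E *ᵥ v, A *ᵥ v) ∈ ranRel E A := ⟨v, rfl⟩

lemma hmemD {E A Q : Matrix (Fin n) (Fin n) ℂ} {D : Rel n}
    (h : ranRel E A = PHDAE.comp D (invRel (graphRel Q))) (v : Fin n → ℂ) :
    ∃ y, E *ᵥ v = Q *ᵥ y ∧ (y, A *ᵥ v) ∈ D := by
  have hm := mem_ranRel_self E A v
  rw [h, mem_comp] at hm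
  obtain ⟨y, h1, h2⟩ := hm
  rw [mem_invGraph] at h1
  exact ⟨y, h1, h2⟩

lemma mulVecQ_inj {Q : Matrix (Fin n) (Fin n) ℂ} (hQ : Q.PosDef) :
    Function.Injective (Matrix.mulVecLin Q) := by
  rw [← LinearMap.ker_eq_bot] at *
  rw [LinearMap.ker_eq_bot']
  intro m hm
  by_contra hm0
  have hpos := hQ.re_dotProduct_pos hm0
  rw [Matrix.mulVecLin_apply] at hm
  rw [hm] at hpos
  simp at hpos

lemma ker_triv {E A Q : Matrix (Fin n) (Fin n) ℂ} (hQ : Q.PosDef) {D : Rel n}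
    (hD : IsMaxDissipativeRel D)
    (h : ranRel E A = PHDAE.comp D (invRel (graphRel Q))) :
    ∀ v : Fin n → ℂ, E *ᵥ v = 0 → A *ᵥ v = 0 → v = 0 := by
  intro v hE hA
  by_contra hv
  -- the map Ψ is injective
  have hΨinj : Function.Injective
      ((Matrix.mulVecLin Q).prodMap (LinearMap.id (R := ℂ) (M := Fin n → ℂ))) := by
    rw [LinearMap.coe_prodMap]
    exact Function.Injective.prodMap (mulVecQ_inj hQ) (fun a b hab => hab)
  have h1 : Module.finrank ℂ (PHDAE.comp D (invRel (graphRel Q)))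
      = Module.finrank ℂ D := by
    rw [comp_eq_map]
    exact (Submodule.equivMapOfInjective _ hΨinj D).finrank_eq.symm
  set J := (Matrix.mulVecLin E).prod (Matrix.mulVecLin A) with hJ
  have hker : v ∈ LinearMap.ker J := by
    rw [LinearMap.mem_ker, hJ, LinearMap.prod_apply]
    have : (Matrix.mulVecLin E v, Matrix.mulVecLin A v) = ((0 : Fin n → ℂ), (0 : Fin n → ℂ)) := by
      rw [Matrix.mulVecLin_apply, Matrix.mulVecLin_apply, hE, hA]
    exact this
  have hkerpos : 0 < Module.finrank ℂ (LinearMap.ker J) := by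
    rcases Nat.eq_zero_or_pos (Module.finrank ℂ (LinearMap.ker J)) with h0 | h0
    · exfalso
      rw [Submodule.finrank_eq_zero] at h0
      rw [h0] at hker
      exact hv hker
    · exact h0
  have hrn : Module.finrank ℂ (ranRel E A) < n := by
    have hrk := LinearMap.finrank_range_add_finrank_ker J
    have hfn : Module.finrank ℂ (Fin n → ℂ) = n := Module.finrank_fin_fun ℂ
    have : Module.finrank ℂ (ranRel E A) = Module.finrank ℂ (LinearMap.range J) := rfl
    omega
  have hDlt : Module.finrank ℂ D < n := by
    rw [h] at hrn
    rw [h1] at hrn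
    exact hrn
  -- the difference map
  set Φ : ((Fin n → ℂ) × (Fin n → ℂ)) →ₗ[ℂ] Vn n :=
    tV.toLinearMap ∘ₗ (LinearMap.fst ℂ (Fin n → ℂ) (Fin n → ℂ) - LinearMap.snd ℂ _ _) with hΦ
  have hΦapp : ∀ p : (Fin n → ℂ) × (Fin n → ℂ), Φ p = tV p.1 - tV p.2 := by
    intro p
    rw [hΦ]
    simp [LinearMap.sub_apply, map_sub]
  set S := D.map Φ with hS
  have hSlt : Module.finrank ℂ S < n := lt_of_le_of_lt (Submodule.finrank_map_le Φ D) hDlt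
  have hSne : S ≠ ⊤ := by
    intro htop
    rw [htop] at hSlt
    rw [finrank_top, finrank_euclideanSpace_fin] at hSlt
    omega
  have hSperp : Sᗮ ≠ ⊥ := fun hbot => hSne (Submodule.orthogonal_eq_bot_iff.mp hbot)
  obtain ⟨u, huS, hune⟩ := (Submodule.ne_bot_iff _).mp hSperp
  set u' := tV.symm u with hu'
  set p₀ : (Fin n → ℂ) × (Fin n → ℂ) := ((2⁻¹ : ℂ) • u', -((2⁻¹ : ℂ) • u')) with hp₀
  set D' : Rel n := D ⊔ Submodule.span ℂ {p₀} with hD'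
  have hD'diss : IsDissipativeRel D' := by
    intro q hq
    rw [hD', Submodule.mem_sup] at hq
    obtain ⟨p, hp, s, hs, rfl⟩ := hq
    obtain ⟨c, rfl⟩ := Submodule.mem_span_singleton.mp hs
    set a : Fin n → ℂ := c • ((2⁻¹ : ℂ) • u') with ha
    have hq1 : (p + c • p₀).1 = p.1 + a := rfl
    have hq2 : (p + c • p₀).2 = p.2 - a := by
      show p.2 + c • (-((2⁻¹ : ℂ) • u')) = p.2 - a
      rw [smul_neg, ← ha, sub_eq_add_neg]
    have hta : tV a ∈ Sᗮ := by
      have htaeq : tV a = (c * 2⁻¹) • u := by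
        rw [ha, _root_.map_smul, _root_.map_smul, hu', LinearEquiv.apply_symm_apply, smul_smul]
      rw [htaeq]
      exact Submodule.smul_mem _ _ huS
    have horthS := (Submodule.mem_orthogonal S (tV a)).mp hta
    have hpS : tV p.1 - tV p.2 ∈ S := by
      refine ⟨p, hp, ?_⟩
      rw [hΦapp]
    have horth : (inner ℂ (tV p.1 - tV p.2) (tV a) : ℂ) = 0 := horthS _ hpS
    have heq : (inner ℂ (tV p.1) (tV a) : ℂ) = inner ℂ (tV p.2) (tV a) := by
      rw [inner_sub_left] at horth
      exact sub_eq_zero.mp horth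
    have hipexp : ip (p.1 + a) (p.2 - a)
        = ip p.1 p.2 - inner ℂ (tV p.1) (tV a) + (inner ℂ (tV a) (tV p.2) : ℂ)
          - inner ℂ (tV a) (tV a) := by
      rw [ip_eq_inner, ip_eq_inner, map_add, map_sub]
      rw [inner_add_left, inner_sub_right, inner_sub_right]
      ring
    have hgoal : (ip (p + c • p₀).1 (p + c • p₀).2).re ≤ 0 := by
      rw [hq1, hq2, hipexp]
      have hre1 : ((inner ℂ (tV p.1) (tV a) : ℂ)).re = ((inner ℂ (tV a) (tV p.2) : ℂ)).re := by
        rw [heq]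
        exact (inner_re_symm (𝕜 := ℂ) (tV a) (tV p.2)).symm
      have hre2 : (0 : ℝ) ≤ ((inner ℂ (tV a) (tV a) : ℂ)).re := by
        rw [show ((inner ℂ (tV a) (tV a) : ℂ)).re = ‖tV a‖ ^ 2 from inner_self_eq_norm_sq (𝕜 := ℂ) (tV a)]
        positivity
      have hre3 : (ip p.1 p.2).re ≤ 0 := hD.1 p hp
      simp only [Complex.sub_re, Complex.add_re]
      linarith
    exact hgoal
  have heqD : D = D' := hD.2 D' hD'diss le_sup_left
  have hp₀D : p₀ ∈ D := by
    rw [heqD, hD']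
    exact Submodule.mem_sup_right (Submodule.mem_span_singleton_self p₀)
  have huS2 : u ∈ S := by
    refine ⟨p₀, hp₀D, ?_⟩
    rw [hΦapp, ← map_sub]
    have h8 : p₀.1 - p₀.2 = u' := by
      show (2⁻¹ : ℂ) • u' - -((2⁻¹ : ℂ) • u') = u'
      rw [sub_neg_eq_add, ← add_smul]
      norm_num
    rw [h8, hu', LinearEquiv.apply_symm_apply]
  have hzero : (inner ℂ u u : ℂ) = 0 := (Submodule.mem_orthogonal S u).mp huS u huS2
  exact hune (inner_self_eq_zero.mp hzero)

end Stmt18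
end
end Stmt18Aux3
section Stmt18Aux4
open PHDAE Matrix
noncomputable section
namespace Stmt18
variable {n : ℕ}

lemma exists_lowerBound {E A : Matrix (Fin n) (Fin n) ℂ}
    (hker : ∀ v : Fin n → ℂ, E *ᵥ v = 0 → A *ᵥ v = 0 → v = 0) :
    ∃ Cg : ℝ, 0 ≤ Cg ∧ ∀ v : Fin n → ℂ,
      ‖tV v‖ ≤ Cg * (‖tV (E *ᵥ v)‖ + ‖tV (A *ᵥ v)‖) := by
  set J : Vn n →ₗ[ℂ] Vn n × Vn n :=
    (Matrix.toEuclideanLin E).prod (Matrix.toEuclideanLin A) with hJ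
  have hJapp : ∀ v : Fin n → ℂ, J (tV v) = (tV (E *ᵥ v), tV (A *ᵥ v)) := by
    intro v
    rw [hJ, LinearMap.prod_apply]
    rw [tV_mulVec, tV_mulVec]
    rfl
  have hinj : Function.Injective J := by
    rw [← LinearMap.ker_eq_bot, LinearMap.ker_eq_bot']
    intro m hm
    set v := tV.symm m with hv
    have hmv : m = tV v := (LinearEquiv.apply_symm_apply tV m).symm
    rw [hmv, hJapp v] at hm
    have h1 : tV (E *ᵥ v) = 0 := congrArg Prod.fst hm
    have h2 : tV (A *ᵥ v) = 0 := congrArg Prod.snd hm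
    have hE : E *ᵥ v = 0 := by
      apply tV.injective
      simpa using h1
    have hA : A *ᵥ v = 0 := by
      apply tV.injective
      simpa using h2
    rw [hmv, hker v hE hA, map_zero]
  set g := (LinearEquiv.ofInjective J hinj).symm with hg
  set gc := LinearMap.toContinuousLinearMap g.toLinearMap with hgc
  refine ⟨‖gc‖, ContinuousLinearMap.opNorm_nonneg gc, fun v => ?_⟩
  have hvx : tV v = g ⟨J (tV v), LinearMap.mem_range_self J (tV v)⟩ := by
    rw [hg]
    refine ((LinearEquiv.symm_apply_eq _).mpr ?_).symm
    apply Subtype.ext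
    rw [LinearEquiv.ofInjective_apply]
  have hle : ‖g ⟨J (tV v), LinearMap.mem_range_self J (tV v)⟩‖
      ≤ ‖gc‖ * ‖(⟨J (tV v), LinearMap.mem_range_self J (tV v)⟩ : LinearMap.range J)‖ := by
    have := gc.le_opNorm (⟨J (tV v), LinearMap.mem_range_self J (tV v)⟩ : LinearMap.range J)
    simpa [hgc] using this
  have hnorm : ‖(⟨J (tV v), LinearMap.mem_range_self J (tV v)⟩ : LinearMap.range J)‖
      = ‖J (tV v)‖ := rfl
  have hprod : ‖J (tV v)‖ ≤ ‖tV (E *ᵥ v)‖ + ‖tV (A *ᵥ v)‖ := by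
    rw [hJapp v, Prod.norm_def]
    apply max_le
    · linarith [norm_nonneg (tV (A *ᵥ v))]
    · linarith [norm_nonneg (tV (E *ᵥ v))]
  calc ‖tV v‖ = ‖g ⟨J (tV v), LinearMap.mem_range_self J (tV v)⟩‖ := by rw [← hvx]
    _ ≤ ‖gc‖ * ‖J (tV v)‖ := by rw [← hnorm]; exact hle
    _ ≤ ‖gc‖ * (‖tV (E *ᵥ v)‖ + ‖tV (A *ᵥ v)‖) :=
        mul_le_mul_of_nonneg_left hprod (ContinuousLinearMap.opNorm_nonneg gc)

lemma key_bound {E A Q : Matrix (Fin n) (Fin n) ℂ} (hQ : Q.PosDef) {D : Rel n}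
    (hD : IsMaxDissipativeRel D)
    (h : ranRel E A = PHDAE.comp D (invRel (graphRel Q))) :
    ∃ K : ℝ, 0 ≤ K ∧ ∀ lam : ℝ, 1 ≤ lam → ∀ v : Fin n → ℂ,
      ‖tV v‖ ≤ K * ‖tV (((lam : ℂ) • E - A) *ᵥ v)‖ := by
  obtain ⟨c, hc, hcoer⟩ := coercive hQ
  obtain ⟨CQ, hCQ, hQb⟩ := exists_opBound Q
  obtain ⟨Cg, hCg, hgb⟩ := exists_lowerBound (ker_triv hQ hD h)
  refine ⟨Cg * (2 * (CQ / c) + 1), by positivity, fun lam hlam v => ?_⟩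
  obtain ⟨y, hy1, hy2⟩ := hmemD h v
  set w := ((lam : ℂ) • E - A) *ᵥ v with hw
  have hwE : w = (lam : ℂ) • (E *ᵥ v) - A *ᵥ v := by
    rw [hw, Matrix.sub_mulVec, Matrix.smul_mulVec]
  have hdiss : (ip y (A *ᵥ v)).re ≤ 0 := hD.1 (y, A *ᵥ v) hy2
  have hipw : ip y w = (lam : ℂ) * ip y (Q *ᵥ y) - ip y (A *ᵥ v) := by
    rw [hwE, hy1, ip_eq_inner, map_sub, _root_.map_smul, inner_sub_right, inner_smul_right,
      ip_eq_inner, ip_eq_inner]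
  have hre : (ip y w).re = lam * (ip y (Q *ᵥ y)).re - (ip y (A *ᵥ v)).re := by
    rw [hipw, Complex.sub_re, Complex.re_ofReal_mul]
  have hCS : (ip y w).re ≤ ‖tV y‖ * ‖tV w‖ := by
    rw [ip_eq_inner]
    exact re_inner_le_norm (𝕜 := ℂ) _ _
  have h5 : lam * (c * ‖tV y‖ ^ 2) ≤ ‖tV y‖ * ‖tV w‖ := by
    have s1 : lam * (c * ‖tV y‖ ^ 2) ≤ lam * (ip y (Q *ᵥ y)).re :=
      mul_le_mul_of_nonneg_left (hcoer y) (by linarith)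
    have s2 : lam * (ip y (Q *ᵥ y)).re ≤ (ip y w).re := by linarith
    linarith
  have h6 : lam * c * ‖tV y‖ ≤ ‖tV w‖ := by
    rcases eq_or_lt_of_le (norm_nonneg (tV y)) with h0 | h0
    · rw [← h0, mul_zero]
      exact norm_nonneg _
    · nlinarith
  have hEb : lam * c * ‖tV (E *ᵥ v)‖ ≤ CQ * ‖tV w‖ := by
    rw [hy1]
    have hq := hQb y
    have s1 : lam * c * ‖tV (Q *ᵥ y)‖ ≤ lam * c * (CQ * ‖tV y‖) :=
      mul_le_mul_of_nonneg_left hq (mul_nonneg (by linarith) hc.le)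
    have s2 : CQ * (lam * c * ‖tV y‖) ≤ CQ * ‖tV w‖ := mul_le_mul_of_nonneg_left h6 hCQ
    nlinarith
  have hEb2 : ‖tV (E *ᵥ v)‖ ≤ (CQ / c) * ‖tV w‖ := by
    rw [div_mul_eq_mul_div, le_div_iff₀ hc]
    have s3 : (0:ℝ) ≤ (lam - 1) * c * ‖tV (E *ᵥ v)‖ :=
      mul_nonneg (mul_nonneg (by linarith) hc.le) (norm_nonneg _)
    nlinarith
  have hlamEb : lam * ‖tV (E *ᵥ v)‖ ≤ (CQ / c) * ‖tV w‖ := by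
    rw [div_mul_eq_mul_div, le_div_iff₀ hc]
    nlinarith
  have hAb : ‖tV (A *ᵥ v)‖ ≤ ((CQ / c) + 1) * ‖tV w‖ := by
    have hAv : A *ᵥ v = (lam : ℂ) • (E *ᵥ v) - w := by rw [hwE, sub_sub_cancel]
    have hsm : ‖(lam : ℂ) • tV (E *ᵥ v)‖ = lam * ‖tV (E *ᵥ v)‖ := by
      rw [norm_smul, Complex.norm_real, Real.norm_eq_abs, abs_of_pos (by linarith)]
    calc ‖tV (A *ᵥ v)‖ = ‖(lam : ℂ) • tV (E *ᵥ v) - tV w‖ := by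
          rw [hAv, map_sub, _root_.map_smul]
      _ ≤ ‖(lam : ℂ) • tV (E *ᵥ v)‖ + ‖tV w‖ := norm_sub_le _ _
      _ = lam * ‖tV (E *ᵥ v)‖ + ‖tV w‖ := by rw [hsm]
      _ ≤ (CQ / c) * ‖tV w‖ + ‖tV w‖ := by linarith
      _ = ((CQ / c) + 1) * ‖tV w‖ := by ring
  calc ‖tV v‖ ≤ Cg * (‖tV (E *ᵥ v)‖ + ‖tV (A *ᵥ v)‖) := hgb v
    _ ≤ Cg * ((CQ / c) * ‖tV w‖ + ((CQ / c) + 1) * ‖tV w‖) :=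
        mul_le_mul_of_nonneg_left (by linarith) hCg
    _ = Cg * (2 * (CQ / c) + 1) * ‖tV w‖ := by ring

lemma det_ne {E A : Matrix (Fin n) (Fin n) ℂ} {K : ℝ}
    (hbound : ∀ lam : ℝ, 1 ≤ lam → ∀ v : Fin n → ℂ,
      ‖tV v‖ ≤ K * ‖tV (((lam : ℂ) • E - A) *ᵥ v)‖)
    (lam : ℝ) (hlam : 1 ≤ lam) : ((lam : ℂ) • E - A).det ≠ 0 := by
  intro hdet
  obtain ⟨v, hv0, hv⟩ := (Matrix.exists_mulVec_eq_zero_iff).mpr hdet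
  have hb := hbound lam hlam v
  rw [hv, map_zero, norm_zero, mul_zero] at hb
  have h0 : tV v = 0 := norm_le_zero_iff.mp hb
  exact hv0 (by apply tV.injective; simpa using h0)

lemma pencilDet_eval (E A : Matrix (Fin n) (Fin n) ℂ) (μ : ℂ) :
    (pencilDet E A).eval μ = (μ • E - A).det := by
  rw [pencilDet]
  have hrh := RingHom.map_det (Polynomial.evalRingHom μ)
    (((Polynomial.X : Polynomial ℂ) • E.map Polynomial.C - A.map Polynomial.C))
  rw [RingHom.mapMatrix_apply] at hrh
  have heval : Polynomial.eval μ
      (((Polynomial.X : Polynomial ℂ) • E.map Polynomial.C - A.map Polynomial.C).det)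
      = (Polynomial.evalRingHom μ)
        (((Polynomial.X : Polynomial ℂ) • E.map Polynomial.C - A.map Polynomial.C).det) := rfl
  rw [heval, hrh]
  congr 1
  ext i j
  simp only [Matrix.map_apply, Matrix.sub_apply, Matrix.smul_apply, smul_eq_mul,
    Polynomial.coe_evalRingHom, Polynomial.eval_sub, Polynomial.eval_mul, Polynomial.eval_X,
    Polynomial.eval_C]

end Stmt18
end
end Stmt18Aux4
open PHDAE Matrix in
/-- if `ran [E; A] = D ∘ L` with `D` maximally dissipative and
`L = (graph Q)⁻¹` for a positive definite `Q`, then `sE − A` is regular and has index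
at most one (bounded resolvent on a real half-axis). -/
theorem stmt_18 {n : ℕ} (E A Q : Matrix (Fin n) (Fin n) ℂ) (hQ : Q.PosDef)
    (D : Rel n) (hD : IsMaxDissipativeRel D)
    (h : ranRel E A = PHDAE.comp D (invRel (graphRel Q))) :
    PencilRegular E A ∧ ∃ M > (0 : ℝ), ∃ ω : ℝ, ∀ lam : ℝ, ω < lam →
      mnorm (((lam : ℂ) • E - A)⁻¹) ≤ M := by
  obtain ⟨K, hK, hbound⟩ := Stmt18.key_bound hQ hD h
  constructor
  · -- regularity
    intro hzero
    have hdet1 : (((1 : ℝ) : ℂ) • E - A).det ≠ 0 := Stmt18.det_ne hbound 1 le_rfl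
    apply hdet1
    rw [← Stmt18.pencilDet_eval, hzero]
    simp
  · refine ⟨Real.sqrt n * K + 1, by positivity, 1, fun lam hlam => ?_⟩
    set B := ((lam : ℂ) • E - A) with hB
    have hdet : B.det ≠ 0 := Stmt18.det_ne hbound lam hlam.le
    have hunit : IsUnit B.det := isUnit_iff_ne_zero.mpr hdet
    have hBB : B * B⁻¹ = 1 := Matrix.mul_nonsing_inv B hunit
    have hcol : ∀ j : Fin n, ‖Stmt18.tV (B⁻¹ *ᵥ Pi.single j 1)‖ ≤ K := by
      intro j
      have h1 := hbound lam hlam.le (B⁻¹ *ᵥ Pi.single j 1)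
      have h2 : B *ᵥ (B⁻¹ *ᵥ Pi.single j 1) = Pi.single j 1 := by
        rw [Matrix.mulVec_mulVec, hBB, Matrix.one_mulVec]
      rw [← hB, h2] at h1
      have h3 : ‖Stmt18.tV (Pi.single j (1 : ℂ))‖ = 1 := by
        rw [EuclideanSpace.norm_eq]
        have : ∀ i, ‖Stmt18.tV (Pi.single j (1 : ℂ)) i‖ ^ 2 = if i = j then 1 else 0 := by
          intro i
          rw [Stmt18.tV_apply]
          by_cases hij : i = j
          · subst hij; simp
          · simp [Pi.single_apply, hij]
        rw [Finset.sum_congr rfl (fun i _ => this i)]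
        simp
      rw [h3, mul_one] at h1
      exact h1
    have hcol2 : ∀ j : Fin n, ∑ i, ‖B⁻¹ i j‖ ^ 2 ≤ K ^ 2 := by
      intro j
      have h5 : ‖Stmt18.tV (B⁻¹ *ᵥ Pi.single j 1)‖ ^ 2 = ∑ i, ‖B⁻¹ i j‖ ^ 2 := by
        rw [EuclideanSpace.norm_eq, Real.sq_sqrt (by positivity)]
        refine Finset.sum_congr rfl (fun i _ => ?_)
        rw [Stmt18.tV_apply]
        have : (B⁻¹ *ᵥ Pi.single j (1 : ℂ)) i = B⁻¹ i j := by
          rw [Matrix.mulVec_single]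
          exact mul_one _
        rw [this]
      rw [← h5]
      have h6 := hcol j
      nlinarith [norm_nonneg (Stmt18.tV (B⁻¹ *ᵥ Pi.single j 1))]
    have hsum : ∑ i, ∑ j, ‖B⁻¹ i j‖ ^ 2 ≤ (n : ℝ) * K ^ 2 := by
      rw [Finset.sum_comm]
      calc ∑ j, ∑ i, ‖B⁻¹ i j‖ ^ 2 ≤ ∑ _j : Fin n, K ^ 2 :=
            Finset.sum_le_sum (fun j _ => hcol2 j)
        _ = (n : ℝ) * K ^ 2 := by simp [Finset.sum_const, mul_comm]
    rw [mnorm]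
    calc Real.sqrt (∑ i, ∑ j, ‖B⁻¹ i j‖ ^ 2)
        ≤ Real.sqrt ((n : ℝ) * K ^ 2) := Real.sqrt_le_sqrt hsum
      _ = Real.sqrt n * K := by
          rw [Real.sqrt_mul (by positivity), Real.sqrt_sq hK]
      _ ≤ Real.sqrt n * K + 1 := by linarith
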